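/- arXiv:2303.17429 — 2 statements merged into one kernel-verified Lean document; each statement's English description precedes it below -/
import Mathlib

section
/- Let Γ be a countably infinite group with a finite symmetric generating set S and Cayley graph 𝒢. If for every α < 1 there exists a Γ-invariant bond percolation P on 𝒢 with E[deg_ω(o)] > α·deg(o) and with two-point function τ(o,·) vanishing at infinity, then there exists a sequence (φ_n) of normalized positive definite functions φ_n : Γ → [0,1] such that each φ_n vanishes at infinity and φ_n converges pointwise to 1 on Γ (i.e., Γ has the Haagerup property). -/
set_option linter.unusedVariables false
set_option maxHeartbeats 1000000


open MeasureTheory Filter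
open scoped ComplexOrder symmDiff

namespace InvPerc

variable {Γ : Type*} [Group Γ]

/-- Percolation configurations: indicator functions on unordered pairs of vertices. -/
abbrev Config (Γ : Type*) := Sym2 Γ → Bool

/-- The edge set of the (right) Cayley graph of `Γ` with respect to `S`. -/
def IsCayleyEdge (S : Finset Γ) (e : Sym2 Γ) : Prop :=
  ∃ g : Γ, ∃ t ∈ S, e = s(g, g * t)

/-- The action of `Γ` on configurations induced by left multiplication:
`e ∈ shift γ ω ↔ γ⁻¹ • e ∈ ω`. -/
def shift (γ : Γ) (ω : Config Γ) : Config Γ :=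
  fun e => ω (Sym2.map (fun x => γ⁻¹ * x) e)

/-- `ConnBy ω u v n` : `u` and `v` are joined by a path of at most `n` open edges of `ω`. -/
def ConnBy (ω : Config Γ) (u v : Γ) (n : ℕ) : Prop :=
  ∃ l : List Γ, l.length ≤ n ∧ List.Chain (fun a b => ω s(a, b) = true) u l ∧
    (u :: l).getLast (List.cons_ne_nil u l) = v

/-- `u` and `v` lie in the same cluster of the configuration `ω` (`u ↔ v` in `ω`). -/
def Conn (ω : Config Γ) (u v : Γ) : Prop := ∃ n : ℕ, ConnBy ω u v n

/-- The two-point function `τ(u,v) = P[u ↔ v]`. -/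
noncomputable def tpf (P : Measure (Config Γ)) (u v : Γ) : ℝ :=
  (P {ω | Conn ω u v}).toReal

/-- A `Γ`-invariant bond percolation on the Cayley graph of `(Γ, S)`: a probability
measure on configurations, supported on subsets of the Cayley edge set, invariant under
the action induced by left multiplication. -/
structure IsInvBondPerc (S : Finset Γ) (P : Measure (Config Γ)) : Prop where
  prob : IsProbabilityMeasure P
  supported : P {ω | ∀ e : Sym2 Γ, ω e = true → IsCayleyEdge S e} = 1
  invariant : ∀ γ : Γ, P.map (shift γ) = P

/-- The expected degree of the origin, `E[deg_ω(o)] = ∑_{t ∈ S} P[{o, t} ∈ ω]`. -/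
noncomputable def expDeg (S : Finset Γ) (P : Measure (Config Γ)) : ℝ :=
  ∑ t ∈ S, (P {ω : Config Γ | ω s(1, t) = true}).toReal

/-- The word length of `g` with respect to the generating set `S`. -/
noncomputable def wlen (S : Finset Γ) (g : Γ) : ℕ :=
  sInf {n : ℕ | ∃ l : List Γ, (∀ x ∈ l, x ∈ S) ∧ l.prod = g ∧ l.length = n}

/-- The word metric `d(g,h) = |g⁻¹h|`. -/
noncomputable def wdist (S : Finset Γ) (g h : Γ) : ℕ := wlen S (g⁻¹ * h)

/-- The two-point function of `P` vanishes at infinity: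
`sup {τ(g,h) : d(g,h) > r} → 0` as `r → ∞`. -/
def TpfVanishes (S : Finset Γ) (P : Measure (Config Γ)) : Prop :=
  ∀ ε : ℝ, 0 < ε → ∃ r : ℕ, ∀ g h : Γ, r < wdist S g h → tpf P g h < ε

/-- `S` is a finite symmetric generating set not containing the identity. -/
def IsSymmGen (S : Finset Γ) : Prop :=
  (1 : Γ) ∉ S ∧ (∀ t ∈ S, t⁻¹ ∈ S) ∧
    ∀ g : Γ, ∃ l : List Γ, (∀ x ∈ l, x ∈ S) ∧ l.prod = g

/-- A positive definite function on `Γ`. -/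
def IsPosDef (φ : Γ → ℂ) : Prop :=
  ∀ (n : ℕ) (g : Fin n → Γ) (a : Fin n → ℂ),
    0 ≤ ∑ i : Fin n, ∑ j : Fin n, (starRingEnd ℂ) (a i) * a j * φ ((g i)⁻¹ * g j)

/-- A conditionally negative definite function on `Γ`. -/
def IsCondNegDef (ψ : Γ → ℝ) : Prop :=
  ψ 1 = 0 ∧ (∀ g : Γ, ψ g⁻¹ = ψ g) ∧
    ∀ (n : ℕ) (g : Fin n → Γ) (a : Fin n → ℝ), (∑ i : Fin n, a i) = 0 →
      ∑ i : Fin n, ∑ j : Fin n, a i * a j * ψ ((g i)⁻¹ * g j) ≤ 0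

end InvPerc

namespace InvPerc

section Aux
variable {Γ : Type*} [Group Γ]
set_option linter.unusedSectionVars false

/-- The one-step relation. -/
def step (ω : Config Γ) (a b : Γ) : Prop := ω s(a, b) = true

lemma step_symm (ω : Config Γ) {a b : Γ} (h : step ω a b) : step ω b a := by
  unfold step at *; rwa [Sym2.eq_swap]

lemma conn_iff_rtg (ω : Config Γ) (u v : Γ) :
    Conn ω u v ↔ Relation.ReflTransGen (step ω) u v := by
  constructor
  · rintro ⟨n, l, -, hc, hl⟩
    exact List.relationReflTransGen_of_exists_isChain_cons l hc hl
  · intro h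
    obtain ⟨l, hc, hl⟩ := List.exists_isChain_cons_of_relationReflTransGen h
    exact ⟨l.length, l, le_refl _, hc, hl⟩

lemma conn_refl (ω : Config Γ) (u : Γ) : Conn ω u u :=
  (conn_iff_rtg ω u u).2 Relation.ReflTransGen.refl

lemma conn_symm {ω : Config Γ} {u v : Γ} (h : Conn ω u v) : Conn ω v u := by
  rw [conn_iff_rtg] at h ⊢
  haveI : Std.Symm (step ω) := ⟨fun a b => step_symm ω⟩
  exact Relation.ReflTransGen.symmetric.symm _ _ h

lemma conn_trans {ω : Config Γ} {u v w : Γ} (h1 : Conn ω u v) (h2 : Conn ω v w) :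
    Conn ω u w := by
  rw [conn_iff_rtg] at h1 h2 ⊢
  exact h1.trans h2

lemma conn_shift (γ : Γ) (ω : Config Γ) (u v : Γ) :
    Conn (shift γ ω) u v ↔ Conn ω (γ⁻¹ * u) (γ⁻¹ * v) := by
  rw [conn_iff_rtg, conn_iff_rtg]
  constructor
  · intro h
    exact Relation.ReflTransGen.lift (fun x => γ⁻¹ * x)
      (fun a b hab => by
        unfold step shift at *
        rwa [Sym2.map_pair_eq] at hab) _ _ h
  · intro h
    have := Relation.ReflTransGen.lift (r := step ω) (p := step (shift γ ω)) (fun x => γ * x)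
      (fun a b hab => by
        show shift γ ω s(γ * a, γ * b) = true
        unfold shift
        rw [Sym2.map_pair_eq]
        simpa [step] using hab) _ _ h
    simpa [Function.onFun] using this

lemma measurable_shift (γ : Γ) : Measurable (shift (Γ := Γ) γ) :=
  measurable_pi_lambda _ fun e => measurable_pi_apply _

lemma measurableSet_chain (l : List Γ) (u : Γ) :
    MeasurableSet {ω : Config Γ | List.Chain (fun a b => ω s(a, b) = true) u l} := by
  induction l generalizing u with
  | nil => simp [List.Chain]
  | cons b t ih =>
    have he : {ω : Config Γ | List.Chain (fun a b => ω s(a, b) = true) u (b :: t)}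
        = ((fun ω : Config Γ => ω s(u, b)) ⁻¹' {true}) ∩
          {ω | List.Chain (fun a b => ω s(a, b) = true) b t} := by
      ext ω; simp [List.Chain]
    rw [he]
    exact ((measurable_pi_apply s(u, b)) (measurableSet_singleton true)).inter (ih b)

lemma measurableSet_conn [Countable Γ] (u v : Γ) :
    MeasurableSet {ω : Config Γ | Conn ω u v} := by
  have he : {ω : Config Γ | Conn ω u v} =
      ⋃ l : List Γ, ⋃ _ : (u :: l).getLast (List.cons_ne_nil u l) = v,
        {ω : Config Γ | List.Chain (fun a b => ω s(a, b) = true) u l} := by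
    ext ω
    simp only [Set.mem_setOf_eq, Set.mem_iUnion]
    constructor
    · rintro ⟨n, l, -, hc, hl⟩; exact ⟨l, hl, hc⟩
    · rintro ⟨l, hl, hc⟩; exact ⟨l.length, l, le_refl _, hc, hl⟩
  rw [he]
  exact MeasurableSet.iUnion fun l => MeasurableSet.iUnion fun _ => measurableSet_chain l u

lemma tpf_invariant [Countable Γ] {P : Measure (Config Γ)}
    (hinv : ∀ γ : Γ, P.map (shift γ) = P) (u v : Γ) :
    tpf P u v = tpf P 1 (u⁻¹ * v) := by
  unfold tpf
  congr 1
  conv_lhs => rw [← hinv u]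
  rw [Measure.map_apply (measurable_shift u) (measurableSet_conn u v)]
  congr 1
  ext ω
  simp [Set.mem_preimage, conn_shift]

lemma tpf_symm [Countable Γ] (P : Measure (Config Γ)) (u v : Γ) :
    tpf P u v = tpf P v u := by
  unfold tpf
  have he : {ω : Config Γ | Conn ω u v} = {ω : Config Γ | Conn ω v u} := by
    ext ω
    exact ⟨fun h => conn_symm h, fun h => conn_symm h⟩
  rw [he]

section
open Finset
lemma key_alg {n : ℕ} (R : Fin n → Fin n → Prop) [DecidableRel R]
    (hrefl : ∀ i, R i i) (hsymm : ∀ {i j}, R i j → R j i)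
    (htrans : ∀ {i j k}, R i j → R j k → R i k) (x : Fin n → ℝ) :
    0 ≤ ∑ i, ∑ j, x i * x j * (if R i j then 1 else 0) := by
  classical
  have hne : ∀ i : Fin n, (univ.filter fun j => R i j).Nonempty :=
    fun i => ⟨i, mem_filter.2 ⟨mem_univ i, hrefl i⟩⟩
  set r : Fin n → Fin n := fun i => (univ.filter fun j => R i j).min' (hne i) with hr
  have hmem : ∀ i, R i (r i) := fun i => (mem_filter.1 (min'_mem _ (hne i))).2
  have hiff : ∀ i j, R i j ↔ r i = r j := by
    intro i j
    constructor
    · intro h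
      have hset : (univ.filter fun k => R i k) = (univ.filter fun k => R j k) := by
        ext k
        simp only [mem_filter, mem_univ, true_and]
        exact ⟨fun hik => htrans (hsymm h) hik, fun hjk => htrans h hjk⟩
      simp only [hr, hset]
    · intro h
      exact htrans (hmem i) (h ▸ hsymm (hmem j))
  set c : Fin n → ℝ := fun k => ∑ j ∈ univ.filter fun j => r j = k, x j with hc
  have step1 : ∑ i, ∑ j, x i * x j * (if R i j then 1 else 0)
      = ∑ i, x i * c (r i) := by
    refine Finset.sum_congr rfl fun i _ => ?_
    have : ∀ j : Fin n, x i * x j * (if R i j then 1 else 0)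
        = x i * (if r j = r i then x j else 0) := by
      intro j
      by_cases h : R i j
      · rw [if_pos h, if_pos ((hiff i j).1 h).symm]; ring
      · rw [if_neg h, if_neg (fun he => h ((hiff i j).2 he.symm))]; ring
    rw [Finset.sum_congr rfl fun j _ => this j, ← Finset.mul_sum]
    simp only [hc]
    rw [Finset.sum_filter]
  rw [step1, ← Finset.sum_fiberwise univ r (fun i => x i * c (r i))]
  refine Finset.sum_nonneg fun k _ => ?_
  have : ∑ i ∈ univ.filter fun i => r i = k, x i * c (r i) = c k * c k := by
    rw [Finset.sum_congr rfl (fun i hi => by rw [(mem_filter.1 hi).2]), ← Finset.sum_mul]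
  rw [this]
  exact mul_self_nonneg _
end

lemma sum_tpf_nonneg [Countable Γ] (P : Measure (Config Γ)) [IsProbabilityMeasure P]
    {n : ℕ} (g : Fin n → Γ) (x : Fin n → ℝ) :
    0 ≤ ∑ i, ∑ j, x i * x j * tpf P (g i) (g j) := by
  classical
  set A : Fin n → Fin n → Set (Config Γ) := fun i j => {ω | Conn ω (g i) (g j)} with hA
  have hAm : ∀ i j, MeasurableSet (A i j) := fun i j => measurableSet_conn _ _
  have h1 : ∀ i j : Fin n, x i * x j * tpf P (g i) (g j)
      = ∫ ω, (A i j).indicator (fun _ => x i * x j) ω ∂P := by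
    intro i j
    rw [MeasureTheory.integral_indicator_const _ (hAm i j)]
    simp only [smul_eq_mul, tpf, Measure.real, hA]
    ring
  have hint : ∀ i j : Fin n, MeasureTheory.Integrable
      ((A i j).indicator (fun _ => x i * x j)) P :=
    fun i j => (MeasureTheory.integrable_const _).indicator (hAm i j)
  calc (0:ℝ) ≤ ∫ ω, ∑ i : Fin n, ∑ j : Fin n,
        (A i j).indicator (fun _ => x i * x j) ω ∂P := by
        refine MeasureTheory.integral_nonneg fun ω => ?_
        have : ∀ i j : Fin n, (A i j).indicator (fun _ => x i * x j) ω
            = x i * x j * (if Conn ω (g i) (g j) then 1 else 0) := by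
          intro i j
          simp only [hA, Set.indicator_apply, Set.mem_setOf_eq]
          by_cases h : Conn ω (g i) (g j) <;> simp [h]
        simp only [this]
        exact key_alg (fun i j => Conn ω (g i) (g j)) (fun i => conn_refl ω (g i))
          (fun h => conn_symm h) (fun h1 h2 => conn_trans h1 h2) x
    _ = ∑ i : Fin n, ∑ j : Fin n, ∫ ω, (A i j).indicator (fun _ => x i * x j) ω ∂P := by
        rw [MeasureTheory.integral_finset_sum _ (fun i _ =>
          MeasureTheory.integrable_finset_sum _ (fun j _ => hint i j))]
        exact Finset.sum_congr rfl fun i _ =>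
          MeasureTheory.integral_finset_sum _ (fun j _ => hint i j)
    _ = ∑ i : Fin n, ∑ j : Fin n, x i * x j * tpf P (g i) (g j) := by
        exact Finset.sum_congr rfl fun i _ => Finset.sum_congr rfl fun j _ => (h1 i j).symm


lemma tpf_posdef [Countable Γ] (P : Measure (Config Γ)) [IsProbabilityMeasure P]
    (hinv : ∀ γ : Γ, P.map (shift γ) = P) :
    IsPosDef (fun g0 => ((tpf P 1 g0 : ℝ) : ℂ)) := by
  intro n g a
  have hrw : ∀ i j : Fin n, ((tpf P 1 ((g i)⁻¹ * g j) : ℝ) : ℂ)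
      = ((tpf P (g i) (g j) : ℝ) : ℂ) := fun i j => by rw [← tpf_invariant hinv]
  simp only [hrw]
  rw [Complex.le_def]
  have hterm_re : ∀ i j : Fin n,
      ((starRingEnd ℂ) (a i) * a j * ((tpf P (g i) (g j) : ℝ) : ℂ)).re
      = (a i).re * (a j).re * tpf P (g i) (g j)
        + (a i).im * (a j).im * tpf P (g i) (g j) := by
    intro i j
    simp [Complex.mul_re, Complex.mul_im]
    ring
  have hterm_im : ∀ i j : Fin n,
      ((starRingEnd ℂ) (a i) * a j * ((tpf P (g i) (g j) : ℝ) : ℂ)).im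
      = ((a i).re * (a j).im - (a i).im * (a j).re) * tpf P (g i) (g j) := by
    intro i j
    simp only [Complex.mul_re, Complex.mul_im, Complex.conj_re, Complex.conj_im,
      Complex.ofReal_re, Complex.ofReal_im]
    ring
  constructor
  · simp only [Complex.re_sum, Complex.zero_re, hterm_re]
    rw [Finset.sum_congr rfl fun i _ => Finset.sum_add_distrib]
    rw [Finset.sum_add_distrib]
    have h1 := sum_tpf_nonneg P g (fun i => (a i).re)
    have h2 := sum_tpf_nonneg P g (fun i => (a i).im)
    linarith
  · simp only [Complex.im_sum, Complex.zero_im, hterm_im]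
    set u : Fin n → Fin n → ℝ := fun i j =>
      ((a i).re * (a j).im - (a i).im * (a j).re) * tpf P (g i) (g j) with hu
    have hanti : ∀ i j, u j i = -u i j := by
      intro i j
      simp only [hu]
      rw [tpf_symm P (g j) (g i)]
      ring
    have hcomm : ∑ i : Fin n, ∑ j : Fin n, u i j = ∑ j : Fin n, ∑ i : Fin n, u i j :=
      Finset.sum_comm
    have : ∑ i : Fin n, ∑ j : Fin n, u i j = - ∑ i : Fin n, ∑ j : Fin n, u i j := by
      nth_rewrite 1 [hcomm]
      rw [← Finset.sum_neg_distrib]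
      refine Finset.sum_congr rfl fun j _ => ?_
      rw [← Finset.sum_neg_distrib]
      exact Finset.sum_congr rfl fun i _ => hanti j i
    linarith


lemma tpf_nonneg (P : Measure (Config Γ)) (u v : Γ) : 0 ≤ tpf P u v :=
  ENNReal.toReal_nonneg

lemma tpf_self (P : Measure (Config Γ)) [IsProbabilityMeasure P] (u : Γ) :
    tpf P u u = 1 := by
  unfold tpf
  have he : {ω : Config Γ | Conn ω u u} = Set.univ := by
    ext ω; simp [conn_refl]
  rw [he, measure_univ, ENNReal.toReal_one]

lemma tpf_le_one (P : Measure (Config Γ)) [IsProbabilityMeasure P] (u v : Γ) :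
    tpf P u v ≤ 1 := by
  unfold tpf
  rw [← ENNReal.toReal_one]
  exact ENNReal.toReal_mono ENNReal.one_ne_top prob_le_one

lemma tpf_triangle [Countable Γ] (P : Measure (Config Γ)) [IsProbabilityMeasure P]
    (u v w : Γ) : tpf P u v + tpf P v w ≤ 1 + tpf P u w := by
  set A := {ω : Config Γ | Conn ω u v} with hA
  set B := {ω : Config Γ | Conn ω v w} with hB
  set C := {ω : Config Γ | Conn ω u w} with hC
  have hsub : A ∩ B ⊆ C := fun ω h => conn_trans h.1 h.2
  have key : P A + P B ≤ 1 + P C := by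
    rw [← measure_union_add_inter A (measurableSet_conn v w)]
    exact add_le_add prob_le_one (measure_mono hsub)
  have h1 : (P A + P B).toReal ≤ (1 + P C).toReal := by
    refine ENNReal.toReal_mono ?_ key
    exact ENNReal.add_ne_top.2 ⟨ENNReal.one_ne_top, measure_ne_top P C⟩
  rw [ENNReal.toReal_add (measure_ne_top P A) (measure_ne_top P B),
    ENNReal.toReal_add ENNReal.one_ne_top (measure_ne_top P C), ENNReal.toReal_one] at h1
  exact h1

lemma edge_le_tpf [Countable Γ] (P : Measure (Config Γ)) [IsProbabilityMeasure P] (t : Γ) :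
    (P {ω : Config Γ | ω s(1, t) = true}).toReal ≤ tpf P 1 t := by
  refine ENNReal.toReal_mono (measure_ne_top P _) (measure_mono ?_)
  intro ω h
  exact ⟨1, [t], le_refl 1, List.Chain.cons h List.Chain.nil, by simp⟩

lemma wlen_spec (S : Finset Γ)
    (hgen : ∀ g : Γ, ∃ l : List Γ, (∀ x ∈ l, x ∈ S) ∧ l.prod = g) (g : Γ) :
    ∃ l : List Γ, (∀ x ∈ l, x ∈ S) ∧ l.prod = g ∧ l.length = wlen S g := by
  have hne : {n : ℕ | ∃ l : List Γ, (∀ x ∈ l, x ∈ S) ∧ l.prod = g ∧ l.length = n}.Nonempty := by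
    obtain ⟨l, h1, h2⟩ := hgen g
    exact ⟨l.length, l, h1, h2, rfl⟩
  exact Nat.sInf_mem hne

lemma ball_finite (S : Finset Γ)
    (hgen : ∀ g : Γ, ∃ l : List Γ, (∀ x ∈ l, x ∈ S) ∧ l.prod = g) (r : ℕ) :
    {g : Γ | wlen S g ≤ r}.Finite := by
  have hsub : {g : Γ | wlen S g ≤ r} ⊆
      (fun l : List {x // x ∈ S} => (l.map Subtype.val).prod) '' {l | l.length ≤ r} := by
    intro g hg
    obtain ⟨l, h1, h2, h3⟩ := wlen_spec S hgen g
    refine ⟨l.pmap (fun x hx => (⟨x, hx⟩ : {x // x ∈ S})) h1, ?_, ?_⟩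
    · simp only [Set.mem_setOf_eq, List.length_pmap]
      rw [h3]; exact hg
    · show (List.map Subtype.val (List.pmap (fun x hx => (⟨x, hx⟩ : {x // x ∈ S})) l h1)).prod = g
      rw [List.map_pmap]
      simp only [List.pmap_eq_map]
      simpa using h2
  exact Set.Finite.subset (Set.Finite.image _ (List.finite_length_le _ r)) hsub


lemma tpf_path_bound [Countable Γ] (P : Measure (Config Γ)) [IsProbabilityMeasure P]
    (hinv : ∀ γ : Γ, P.map (shift γ) = P) (S : Finset Γ) (ε : ℝ)
    (hedge : ∀ t ∈ S, 1 - ε ≤ tpf P 1 t) :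
    ∀ l : List Γ, (∀ x ∈ l, x ∈ S) → 1 - l.length * ε ≤ tpf P 1 l.prod := by
  intro l
  induction l with
  | nil => intro _; simp [tpf_self]
  | cons t l ih =>
    intro hmem
    have h1 : 1 - ε ≤ tpf P 1 t := hedge t (hmem t (by simp))
    have h2 : 1 - l.length * ε ≤ tpf P 1 l.prod := ih fun x hx => hmem x (by simp [hx])
    have h3 := tpf_triangle P 1 t (t * l.prod)
    have h4 : tpf P t (t * l.prod) = tpf P 1 l.prod := by
      rw [tpf_invariant hinv]
      simp
    rw [h4] at h3
    have : (t :: l).prod = t * l.prod := List.prod_cons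
    rw [this]
    push_cast [List.length_cons]
    linarith


end Aux

/-- If the Cayley graph of `Γ` admits, for every `α < 1`, a `Γ`-invariant bond
percolation with `E[deg_ω(o)] > α·deg(o)` and two-point function vanishing at infinity, then
there is a sequence of normalized positive definite functions on `Γ`, each vanishing at
infinity, converging pointwise to `1` (Γ has the Haagerup property). -/
theorem percolation_implies_haagerup {Γ : Type*} [Group Γ] [Countable Γ] [Infinite Γ]
    (S : Finset Γ) (hS : IsSymmGen S)
    (hperc : ∀ α : ℝ, α < 1 → ∃ P : Measure (Config Γ),
      IsInvBondPerc S P ∧ expDeg S P > α * (S.card : ℝ) ∧ TpfVanishes S P) :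
    ∃ φ : ℕ → Γ → ℝ,
      (∀ n : ℕ,
        (∀ g : Γ, 0 ≤ φ n g ∧ φ n g ≤ 1) ∧
        φ n 1 = 1 ∧
        IsPosDef (fun g => (φ n g : ℂ)) ∧
        (∀ c : ℝ, 0 < c → {g : Γ | c ≤ |φ n g|}.Finite)) ∧
      (∀ g : Γ, Tendsto (fun n => φ n g) atTop (nhds 1)) := by
  classical
  obtain ⟨hone, hsymminv, hgen⟩ := hS
  have hSne : S.Nonempty := by
    by_contra h
    obtain ⟨g, hg⟩ := exists_ne (1 : Γ)
    obtain ⟨l, hl1, hl2⟩ := hgen g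
    cases l with
    | nil => exact hg (by simpa using hl2.symm)
    | cons a t => exact h ⟨a, hl1 a (by simp)⟩
  have hcard : 0 < (S.card : ℝ) := by exact_mod_cast Finset.card_pos.2 hSne
  set ε : ℕ → ℝ := fun n => ((n : ℝ) + 1)⁻¹ with hε
  have hεpos : ∀ n, 0 < ε n := fun n => by positivity
  have hα : ∀ n : ℕ, (1 : ℝ) - ε n / S.card < 1 :=
    fun n => sub_lt_self _ (div_pos (hεpos n) hcard)
  choose P hPperc hPdeg hPvan using fun n : ℕ => hperc (1 - ε n / S.card) (hα n)
  have hprob : ∀ n, IsProbabilityMeasure (P n) := fun n => (hPperc n).prob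
  have hinv : ∀ n, ∀ γ : Γ, (P n).map (shift γ) = P n := fun n => (hPperc n).invariant
  -- the edge bound
  have hedge : ∀ n : ℕ, ∀ t ∈ S, 1 - ε n ≤ tpf (P n) 1 t := by
    intro n t ht
    haveI := hprob n
    set p : Γ → ℝ := fun t => ((P n) {ω : Config Γ | ω s(1, t) = true}).toReal with hp
    have hple : ∀ t' : Γ, p t' ≤ 1 := by
      intro t'
      rw [hp]
      rw [← ENNReal.toReal_one]
      exact ENNReal.toReal_mono ENNReal.one_ne_top prob_le_one
    have herase : ∑ t' ∈ S.erase t, p t' ≤ ((S.erase t).card : ℝ) := by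
      calc ∑ t' ∈ S.erase t, p t' ≤ ∑ t' ∈ S.erase t, (1 : ℝ) :=
            Finset.sum_le_sum fun t' _ => hple t'
        _ = ((S.erase t).card : ℝ) := by simp
    have hsplit : p t + ∑ t' ∈ S.erase t, p t' = expDeg S (P n) :=
      Finset.add_sum_erase S p ht
    have hcard' : ((S.erase t).card : ℝ) = (S.card : ℝ) - 1 := by
      rw [Finset.card_erase_of_mem ht]
      have : 1 ≤ S.card := Finset.card_pos.2 hSne
      push_cast [Nat.cast_sub this]
      ring
    have hdeg := hPdeg n
    have hdiv : ε n / S.card * S.card = ε n := div_mul_cancel₀ _ (ne_of_gt hcard)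
    have hpt : 1 - ε n ≤ p t := by
      have : expDeg S (P n) > (1 - ε n / S.card) * S.card := hdeg
      nlinarith [hsplit, herase, hcard', hdiv]
    exact le_trans hpt (edge_le_tpf (P n) t)
  refine ⟨fun n g => tpf (P n) 1 g, fun n => ?_, ?_⟩
  · haveI := hprob n
    refine ⟨fun g => ⟨tpf_nonneg _ _ _, tpf_le_one _ _ _⟩, tpf_self _ _, tpf_posdef _ (hinv n), ?_⟩
    intro c hc
    obtain ⟨r, hr⟩ := hPvan n c hc
    refine Set.Finite.subset (ball_finite S hgen r) ?_
    intro g hg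
    simp only [Set.mem_setOf_eq] at hg ⊢
    rw [abs_of_nonneg (tpf_nonneg _ _ _)] at hg
    by_contra h
    push_neg at h
    have hw : r < wdist S 1 g := by
      unfold wdist
      simpa using h
    exact absurd hg (not_le.2 (hr 1 g hw))
  · intro g
    obtain ⟨l, hl1, hl2, hl3⟩ := wlen_spec S hgen g
    have hlow : ∀ n : ℕ, 1 - (wlen S g : ℝ) * ε n ≤ tpf (P n) 1 g := by
      intro n
      haveI := hprob n
      have := tpf_path_bound (P n) (hinv n) S (ε n) (hedge n) l hl1
      rw [hl2, hl3] at this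
      exact this
    have hup : ∀ n : ℕ, tpf (P n) 1 g ≤ 1 := fun n => by
      haveI := hprob n; exact tpf_le_one _ _ _
    have hεlim : Tendsto ε atTop (nhds 0) := by
      have := tendsto_one_div_add_atTop_nhds_zero_nat (𝕜 := ℝ)
      simpa [hε, one_div] using this
    have hllim : Tendsto (fun n => 1 - (wlen S g : ℝ) * ε n) atTop (nhds 1) := by
      have := (hεlim.const_mul ((wlen S g : ℝ))).const_sub 1
      simpa using this
    exact tendsto_of_tendsto_of_tendsto_of_le_of_le hllim tendsto_const_nhds hlow hup

end InvPerc
end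

section
/- Let F_r be the free group on r ≥ 1 generators, and let |g| denote the word length of g with respect to the free generators and their inverses (the length of the reduced word representing g). Then for every p ∈ (0,1), the function g ↦ p^{|g|} is a normalized positive definite function on F_r; equivalently, for every λ > 0 the function g ↦ exp(−λ|g|) is positive definite, so the word length function on F_r is conditionally negative definite (Haagerup's theorem). -/
open MeasureTheory Filter
open scoped ComplexOrder symmDiff

namespace InvPerc

/-- The word length on the free group `F_r` with respect to the free generators and their
inverses: the length of the reduced word. -/
def freeLen {r : ℕ} (g : FreeGroup (Fin r)) : ℕ := (FreeGroup.toWord g).length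

section Aux


open FreeGroup List
open scoped symmDiff

variable {α : Type*} [DecidableEq α]

/-- non-cancelling adjacency -/
def NR {α : Type*} (a b : α × Bool) : Prop := ¬(b.1 = a.1 ∧ b.2 = !a.2)

theorem reduce_of_chain' : ∀ {w : List (α × Bool)}, List.Chain' NR w → FreeGroup.reduce w = w
  | [], _ => rfl
  | [x], _ => rfl
  | x :: y :: t, h => by
    have h1 : NR x y := (List.isChain_cons_cons.mp h).1
    have h2 := reduce_of_chain' (List.isChain_cons_cons.mp h).2
    rw [reduce.cons, h2]
    have h1' : ¬(x.1 = y.1 ∧ x.2 = !y.2) := by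
      simp only [NR] at h1
      rintro ⟨ha, hb⟩
      exact h1 ⟨ha.symm, by revert hb; cases x.2 <;> cases y.2 <;> simp⟩
    simp [h1']

theorem exists_pat_of_not_chain' : ∀ {w : List (α × Bool)}, ¬ List.Chain' NR w →
    ∃ (L₂ : List (α × Bool)) (x : α) (b : Bool) (L₃ : List (α × Bool)),
      w = L₂ ++ (x, b) :: (x, !b) :: L₃
  | [], h => absurd List.isChain_nil h
  | [x], h => absurd (List.isChain_singleton x) h
  | x :: y :: t, h => by
    change ¬ List.IsChain NR (x :: y :: t) at h; rw [List.isChain_cons_cons] at h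
    by_cases h1 : NR x y
    · obtain ⟨L₂, a, b, L₃, he⟩ := exists_pat_of_not_chain' (fun hc => h ⟨h1, hc⟩)
      exact ⟨x :: L₂, a, b, L₃, by rw [List.cons_append, ← he]⟩
    · simp only [NR, not_not] at h1
      exact ⟨[], x.1, x.2, t, by simp [← h1.1, ← h1.2, Prod.ext_iff]⟩

theorem chain'_reduce (w : List (α × Bool)) : List.Chain' NR (FreeGroup.reduce w) := by
  by_contra h
  obtain ⟨L₂, x, b, L₃, hw⟩ := exists_pat_of_not_chain' h
  exact FreeGroup.reduce.not hw

theorem chain'_toWord {α : Type*} [DecidableEq α] (g : FreeGroup α) :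
    List.Chain' NR g.toWord := by
  rw [← FreeGroup.reduce_toWord]; exact chain'_reduce _
section
variable {β : Type*} [DecidableEq β]

def prefsW (w : List β) : Finset (List β) :=
  (Finset.range w.length).image (fun k => w.take (k + 1))

theorem mem_prefsW {w e : List β} : e ∈ prefsW w ↔ e ≠ [] ∧ e <+: w := by
  simp only [prefsW, Finset.mem_image, Finset.mem_range]
  constructor
  · rintro ⟨k, hk, rfl⟩
    refine ⟨?_, List.take_prefix _ _⟩
    have : (w.take (k + 1)).length = k + 1 := by
      rw [List.length_take]; omega
    intro h; rw [h] at this; simp at this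
  · rintro ⟨hne, hp⟩
    have hl : 1 ≤ e.length := List.length_pos_iff.mpr hne
    have hle : e.length ≤ w.length := hp.length_le
    refine ⟨e.length - 1, by omega, ?_⟩
    rw [show e.length - 1 + 1 = e.length by omega]
    exact (List.prefix_iff_eq_take.mp hp).symm

theorem card_prefsW (w : List β) : (prefsW w).card = w.length := by
  rw [prefsW, Finset.card_image_of_injOn, Finset.card_range]
  intro a ha b hb hab
  simp only [Finset.coe_range, Set.mem_Iio] at ha hb
  have := congrArg List.length hab
  rw [List.length_take, List.length_take] at this
  omega

theorem prefsW_nil : prefsW ([] : List β) = ∅ := by simp [prefsW]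

theorem prefsW_cons (a : β) (t : List β) :
    prefsW (a :: t) = insert [a] ((prefsW t).image (a :: ·)) := by
  ext e
  simp only [mem_prefsW, Finset.mem_insert, Finset.mem_image]
  constructor
  · rintro ⟨hne, hp⟩
    cases e with
    | nil => exact absurd rfl hne
    | cons x e' =>
      rw [List.cons_prefix_cons] at hp
      obtain ⟨rfl, hp'⟩ := hp
      cases e' with
      | nil => exact Or.inl rfl
      | cons y e'' => exact Or.inr ⟨y :: e'', ⟨List.cons_ne_nil _ _, hp'⟩, rfl⟩
  · rintro (rfl | ⟨e', he', rfl⟩)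
    · exact ⟨List.cons_ne_nil _ _, by simp [List.prefix_iff_eq_take]⟩
    · exact ⟨List.cons_ne_nil _ _, List.cons_prefix_cons.mpr ⟨rfl, he'.2⟩⟩

theorem head_eq_of_mem_prefsW {w e : List β} (h : e ∈ prefsW w) :
    ∃ a t e', w = a :: t ∧ e = a :: e' := by
  rw [mem_prefsW] at h
  obtain ⟨hne, hp⟩ := h
  cases e with
  | nil => exact absurd rfl hne
  | cons x e' =>
    cases w with
    | nil => simpa using hp.length_le
    | cons y t =>
      rw [List.cons_prefix_cons] at hp
      exact ⟨y, t, e', rfl, by rw [hp.1]⟩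

end

section Key
variable {α : Type*} [DecidableEq α]

theorem chain'_invRev {w : List (α × Bool)} (h : List.Chain' NR w) :
    List.Chain' NR (FreeGroup.invRev w) := by
  have : FreeGroup.reduce (FreeGroup.invRev w) = FreeGroup.invRev w := by
    rw [FreeGroup.reduce_invRev, reduce_of_chain' h]
  rw [← this]; exact chain'_reduce _

theorem notmem_image_cons (a : α × Bool) (s : Finset (List (α × Bool)))
    (hs : ∀ e ∈ s, e ≠ []) : [a] ∉ s.image (a :: ·) := by
  intro h
  obtain ⟨e, he, heq⟩ := Finset.mem_image.mp h
  exact hs e he (by injection heq)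

theorem insert_symmDiff_insert {x : List (α × Bool)} {s t : Finset (List (α × Bool))}
    (hxs : x ∉ s) (hxt : x ∉ t) : (insert x s) ∆ (insert x t) = s ∆ t := by
  ext e
  simp only [Finset.mem_symmDiff, Finset.mem_insert]
  by_cases hex : e = x <;> subst_eqs <;> tauto

theorem keyW : ∀ (w w' : List (α × Bool)), List.Chain' NR w → List.Chain' NR w' →
    (FreeGroup.reduce (FreeGroup.invRev w ++ w')).length = (prefsW w ∆ prefsW w').card := by
  intro w
  induction w with
  | nil =>
    intro w' _ hw'
    rw [FreeGroup.invRev_empty, List.nil_append, reduce_of_chain' hw', prefsW_nil,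
      ← Finset.bot_eq_empty, bot_symmDiff, card_prefsW]
  | cons a t ih =>
    intro w' hw hw'
    cases w' with
    | nil =>
      rw [List.append_nil, FreeGroup.reduce_invRev, reduce_of_chain' hw, prefsW_nil,
        ← Finset.bot_eq_empty, symmDiff_bot, card_prefsW, FreeGroup.invRev_length]
    | cons b t' =>
      by_cases hab : a = b
      · subst hab
        have hgrp : FreeGroup.mk (FreeGroup.invRev (a :: t) ++ (a :: t')) =
            FreeGroup.mk (FreeGroup.invRev t ++ t') := by
          rw [← FreeGroup.mul_mk, ← FreeGroup.mul_mk, ← FreeGroup.inv_mk, ← FreeGroup.inv_mk,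
            show (a :: t : List (α × Bool)) = [a] ++ t from rfl,
            show (a :: t' : List (α × Bool)) = [a] ++ t' from rfl,
            ← FreeGroup.mul_mk, ← FreeGroup.mul_mk]
          group
        have hred := FreeGroup.reduce.sound hgrp
        rw [hred, ih t' hw.tail hw'.tail]
        rw [prefsW_cons, prefsW_cons,
          insert_symmDiff_insert
            (notmem_image_cons _ _ (fun e he => (mem_prefsW.mp he).1))
            (notmem_image_cons _ _ (fun e he => (mem_prefsW.mp he).1)),
          ← Finset.image_symmDiff _ _ (fun x y h => by injection h),
          Finset.card_image_of_injective _ (fun x y h => by injection h)]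
      · -- heads differ: no cancellation
        have hchain : List.Chain' NR (FreeGroup.invRev (a :: t) ++ (b :: t')) := by
          change List.IsChain NR _; rw [List.isChain_append]
          refine ⟨chain'_invRev hw, hw', ?_⟩
          intro x hx y hy
          have hxl : x = (a.1, !a.2) := by
            rw [FreeGroup.invRev, List.getLast?_reverse] at hx
            simp at hx
            exact hx.symm
          have hyl : b = y := by simpa using hy
          subst hxl hyl
          rintro ⟨h1, h2⟩
          exact hab (Prod.ext h1.symm (by simpa using h2.symm))
        rw [reduce_of_chain' hchain, List.length_append, FreeGroup.invRev_length]
        have hdisj : Disjoint (prefsW (a :: t)) (prefsW (b :: t')) := by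
          rw [Finset.disjoint_left]
          intro e he1 he2
          obtain ⟨a1, t1, e1, hw1, heq1⟩ := head_eq_of_mem_prefsW he1
          obtain ⟨a2, t2, e2, hw2, heq2⟩ := head_eq_of_mem_prefsW he2
          injection hw1 with h1 _
          injection hw2 with h2 _
          rw [heq1] at heq2
          injection heq2 with h3 _
          exact hab (h1 ▸ h2 ▸ h3)
        rw [hdisj.symmDiff_eq_sup]
        show _ = (prefsW (a :: t) ∪ prefsW (b :: t')).card
        rw [Finset.card_union_of_disjoint hdisj, card_prefsW, card_prefsW]
end Key

section Grp
open scoped ComplexOrder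
variable {α : Type*} [DecidableEq α]

def prefs (g : FreeGroup α) : Finset (List (α × Bool)) := prefsW g.toWord

theorem toWord_len_eq (g h : FreeGroup α) :
    ((g⁻¹ * h).toWord).length = (prefs g ∆ prefs h).card := by
  have hgh : g⁻¹ * h = FreeGroup.mk (FreeGroup.invRev g.toWord ++ h.toWord) := by
    rw [← FreeGroup.mul_mk, ← FreeGroup.inv_mk, FreeGroup.mk_toWord, FreeGroup.mk_toWord]
  rw [hgh, FreeGroup.toWord_mk]
  exact keyW _ _ (chain'_toWord g) (chain'_toWord h)

theorem gram {ι : Type*} (c : Bool → Bool → ℂ) (u0 u1 : Bool → ℂ)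
    (h0 : ∀ b, (starRingEnd ℂ) (u0 b) = u0 b) (h1 : ∀ b, (starRingEnd ℂ) (u1 b) = u1 b)
    (hc : ∀ b b', c b b' = u0 b * u0 b' + u1 b * u1 b')
    {n : ℕ} (v : Fin n → ι → Bool) (U : Finset ι) :
    ∀ x : Fin n → ℂ,
      0 ≤ ∑ i : Fin n, ∑ j : Fin n,
        (starRingEnd ℂ) (x i) * x j * ∏ e ∈ U, c (v i e) (v j e) := by
  classical
  induction U using Finset.cons_induction with
  | empty =>
    intro x
    simp only [Finset.prod_empty, mul_one]
    have hs : ∑ i : Fin n, ∑ j : Fin n, (starRingEnd ℂ) (x i) * x j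
        = (starRingEnd ℂ) (∑ i : Fin n, x i) * (∑ j : Fin n, x j) := by
      rw [map_sum, Finset.sum_mul_sum]
    rw [hs, Complex.conj_mul']
    positivity
  | cons a s ha ih =>
    intro x
    have key : ∀ i j, (starRingEnd ℂ) (x i) * x j *
          ∏ e ∈ Finset.cons a s ha, c (v i e) (v j e)
        = (starRingEnd ℂ) (x i * u0 (v i a)) * (x j * u0 (v j a)) *
            ∏ e ∈ s, c (v i e) (v j e)
          + (starRingEnd ℂ) (x i * u1 (v i a)) * (x j * u1 (v j a)) *
            ∏ e ∈ s, c (v i e) (v j e) := by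
      intro i j
      rw [Finset.prod_cons, hc, _root_.map_mul, _root_.map_mul, h0, h1]
      ring
    simp only [key, Finset.sum_add_distrib]
    exact add_nonneg (ih (fun i => x i * u0 (v i a))) (ih (fun i => x i * u1 (v i a)))
end Grp

section Main
open scoped ComplexOrder
variable {α : Type*} [DecidableEq α]

theorem card_symmDiff_as_sum {n : ℕ} (s : Fin n → Finset (List (α × Bool))) (i j : Fin n) :
    ((s i ∆ s j).card : ℕ) =
      ∑ e ∈ Finset.univ.biUnion s, (if e ∈ s i ∆ s j then 1 else 0) := by
  have hsub : s i ∆ s j ⊆ Finset.univ.biUnion s := by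
    intro e he
    rw [Finset.mem_symmDiff] at he
    rcases he with ⟨h1, _⟩ | ⟨h1, _⟩
    · exact Finset.mem_biUnion.mpr ⟨i, Finset.mem_univ _, h1⟩
    · exact Finset.mem_biUnion.mpr ⟨j, Finset.mem_univ _, h1⟩
  rw [← Finset.card_filter]
  congr 1
  rw [Finset.filter_mem_eq_inter, Finset.inter_eq_right.mpr hsub]

theorem posdef_aux (p : ℝ) (hp0 : 0 < p) (hp1 : p < 1)
    (n : ℕ) (g : Fin n → FreeGroup α) (x : Fin n → ℂ) :
    0 ≤ ∑ i : Fin n, ∑ j : Fin n, (starRingEnd ℂ) (x i) * x j *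
      ((p ^ ((g i)⁻¹ * g j).toWord.length : ℝ) : ℂ) := by
  classical
  set s : Fin n → Finset (List (α × Bool)) := fun i => prefs (g i) with hs
  set U : Finset (List (α × Bool)) := Finset.univ.biUnion s with hU
  set v : Fin n → List (α × Bool) → Bool := fun i e => decide (e ∈ s i) with hv
  set c : Bool → Bool → ℂ := fun b b' => if b = b' then 1 else (p : ℂ) with hcdef
  have entry : ∀ i j, ((p ^ ((g i)⁻¹ * g j).toWord.length : ℝ) : ℂ) =
      ∏ e ∈ U, c (v i e) (v j e) := by
    intro i j
    rw [toWord_len_eq, Complex.ofReal_pow, card_symmDiff_as_sum s i j,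
      ← Finset.prod_pow_eq_pow_sum]
    refine Finset.prod_congr rfl fun e _ => ?_
    by_cases he : e ∈ s i ∆ s j
    · have hne : v i e ≠ v j e := by
        rw [Finset.mem_symmDiff] at he
        simp only [hv, ne_eq, decide_eq_decide]
        tauto
      simp [he, hcdef, hne]
    · have heq : v i e = v j e := by
        rw [Finset.mem_symmDiff] at he
        simp only [hv, decide_eq_decide]
        tauto
      simp [he, hcdef, heq]
  simp only [entry]
  have h1p : (0:ℝ) ≤ 1 - p ^ 2 := by nlinarith
  refine gram c (fun b => if b then (p:ℂ) else 1)
    (fun b => if b then ((Real.sqrt (1 - p^2) : ℝ) : ℂ) else 0) ?_ ?_ ?_ v U x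
  · intro b; cases b <;> simp [Complex.conj_ofReal]
  · intro b; cases b <;> simp [Complex.conj_ofReal]
  · intro b b'
    have hsq : ((Real.sqrt (1 - p^2) : ℝ) : ℂ) * ((Real.sqrt (1 - p^2) : ℝ) : ℂ)
        = ((1 - p^2 : ℝ) : ℂ) := by
      rw [← Complex.ofReal_mul, Real.mul_self_sqrt h1p]
    cases b <;> cases b' <;> simp [hcdef, hsq] <;> push_cast <;> ring
end Main

section CND
variable {α : Type*} [DecidableEq α]

theorem cnd_aux (n : ℕ) (g : Fin n → FreeGroup α) (a : Fin n → ℝ)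
    (ha : ∑ i : Fin n, a i = 0) :
    ∑ i : Fin n, ∑ j : Fin n, a i * a j * ((((g i)⁻¹ * g j).toWord.length : ℕ) : ℝ) ≤ 0 := by
  classical
  set s : Fin n → Finset (List (α × Bool)) := fun i => prefs (g i) with hs
  set U : Finset (List (α × Bool)) := Finset.univ.biUnion s with hU
  set χ : Fin n → List (α × Bool) → ℝ := fun i e => if e ∈ s i then 1 else 0 with hχ
  have entry : ∀ i j, ((((g i)⁻¹ * g j).toWord.length : ℕ) : ℝ) =
      ∑ e ∈ U, (χ i e + χ j e - 2 * χ i e * χ j e) := by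
    intro i j
    rw [toWord_len_eq, card_symmDiff_as_sum s i j]
    push_cast
    refine Finset.sum_congr rfl fun e _ => ?_
    by_cases hi : e ∈ s i <;> by_cases hj : e ∈ s j <;>
      simp [hχ, hi, hj, Finset.mem_symmDiff] <;> norm_num
  simp only [entry]
  calc ∑ i : Fin n, ∑ j : Fin n, a i * a j * ∑ e ∈ U, (χ i e + χ j e - 2 * χ i e * χ j e)
      = ∑ e ∈ U, ∑ i : Fin n, ∑ j : Fin n, a i * a j * (χ i e + χ j e - 2 * χ i e * χ j e) := by
        simp only [Finset.mul_sum]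
        rw [show (∑ i : Fin n, ∑ j : Fin n, ∑ e ∈ U, a i * a j * (χ i e + χ j e - 2 * χ i e * χ j e))
            = ∑ i : Fin n, ∑ e ∈ U, ∑ j : Fin n, a i * a j * (χ i e + χ j e - 2 * χ i e * χ j e) from
          Finset.sum_congr rfl fun i _ => Finset.sum_comm]
        exact Finset.sum_comm
    _ = ∑ e ∈ U, (-2) * (∑ i : Fin n, a i * χ i e)^2 := by
        refine Finset.sum_congr rfl fun e _ => ?_
        have hterm : ∀ i j : Fin n, a i * a j * (χ i e + χ j e - 2 * χ i e * χ j e)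
            = (a i * χ i e) * a j + a i * (a j * χ j e)
              - 2 * ((a i * χ i e) * (a j * χ j e)) := by intros; ring
        simp only [hterm, Finset.sum_add_distrib, Finset.sum_sub_distrib,
          ← Finset.mul_sum, ← Finset.sum_mul, ha, mul_zero, zero_mul, add_zero, zero_add]
        ring
    _ ≤ 0 := by
        refine Finset.sum_nonpos fun e _ => ?_
        nlinarith [sq_nonneg (∑ i : Fin n, a i * χ i e)]
end CND

end Aux


/-- Haagerup: on the free group `F_r`, for every `p ∈ (0,1)` the function
`g ↦ p^{|g|}` is a normalized positive definite function; equivalently, for every `λ > 0`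
the function `g ↦ exp(-λ|g|)` is positive definite, so the word length is conditionally
negative definite. -/
theorem haagerup_free_group (r : ℕ) :
    (∀ p : ℝ, 0 < p → p < 1 →
      ((p : ℝ) ^ freeLen (1 : FreeGroup (Fin r)) = 1 ∧
        IsPosDef (fun g : FreeGroup (Fin r) => ((p ^ freeLen g : ℝ) : ℂ)))) ∧
    (∀ lam : ℝ, 0 < lam →
      IsPosDef (fun g : FreeGroup (Fin r) =>
        ((Real.exp (-lam * (freeLen g : ℝ)) : ℝ) : ℂ))) ∧
    IsCondNegDef (fun g : FreeGroup (Fin r) => (freeLen g : ℝ)) := by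
  refine ⟨fun p hp0 hp1 => ⟨by simp [freeLen], fun n g x => ?_⟩,
    fun lam hlam n g x => ?_, by simp [freeLen], fun g => ?_, fun n g a ha => ?_⟩
  · exact posdef_aux p hp0 hp1 n g x
  · have hrw : ∀ h : FreeGroup (Fin r), ((Real.exp (-lam * (freeLen h : ℝ)) : ℝ) : ℂ)
        = ((Real.exp (-lam) ^ freeLen h : ℝ) : ℂ) := by
      intro h
      rw [mul_comm, Real.exp_nat_mul]
    simp only [hrw]
    exact posdef_aux _ (Real.exp_pos _) (Real.exp_lt_one_iff.mpr (by linarith)) n g x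
  · show ((freeLen g⁻¹ : ℕ) : ℝ) = ((freeLen g : ℕ) : ℝ)
    norm_cast
    simp [freeLen]
  · exact cnd_aux n g a ha


end InvPerc
end
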